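/- In any distinguishing proper 3-coloring of C_n(1, 4) with n ≥ 8, there exists an index i such that the vertices v_i, v_{i+1}, …, v_{i+7} receive colors in the pattern C, A, B, C, B, C, A, B, where {A, B, C} is the set of the three colors used. -/

import Mathlib

open SimpleGraph
open Fin.CommRing

/-- A coloring is proper if adjacent vertices receive different colors. -/
def IsProperColoring {V α : Type*} (G : SimpleGraph V) (c : V → α) : Prop :=
  ∀ x y, G.Adj x y → c x ≠ c y

/-- A coloring is distinguishing if the only color-preserving automorphism is the identity. -/
def IsDistinguishing {V α : Type*} (G : SimpleGraph V) (c : V → α) : Prop :=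
  ∀ φ : G ≃g G, (∀ v, c (φ v) = c v) → ∀ v, φ v = v

private lemma fin3_sum_eq : ∀ a b : Fin 3, a ≠ 0 → b ≠ 0 → a + b ≠ 0 → a = b := by decide

private lemma fin3_neg : ∀ a b : Fin 3, a ≠ 0 → b ≠ 0 → a ≠ b → a + b = 0 := by decide

private lemma fin3_cover : ∀ a b t : Fin 3, a ≠ 0 → b ≠ 0 → t ≠ 0 → a ≠ b → t ≠ a →
    t = b := by decide

private lemma fin3_win : ∀ x t a : Fin 3, x ≠ 0 → t ≠ 0 → a ≠ 0 → a ≠ t →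
    x + t + t + a ≠ 0 → x = t := by decide

private lemma fin3_win' : ∀ x t a : Fin 3, x ≠ 0 → t ≠ 0 → a ≠ 0 → a ≠ t →
    a + t + t + x ≠ 0 → x = t := by decide

private lemma fin3_three : ∀ x u : Fin 3, x + u + u + u = x := by decide

private lemma fin3_minor : ∀ s u : Fin 3, s ≠ 0 → u ≠ 0 → s ≠ u → s = u + u := by decide

private lemma fin3_dbl : ∀ u : Fin 3, u ≠ 0 → u + u ≠ 0 := by decide

private lemma pattern_aux {n : ℕ} (c : ZMod n → Fin 3) (d : ZMod n → Fin 3)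
    (hstep : ∀ v, c (v + 1) = c v + d v) (i : ZMod n) (u : Fin 3) (hu : u ≠ 0)
    (h0 : d i = u) (h1 : d (i + 1) = u) (h2 : d (i + 2) = u)
    (h3a : d (i + 3) ≠ 0) (h3b : d (i + 3) ≠ u)
    (h4 : d (i + 4) = u) (h5 : d (i + 5) = u) (h6 : d (i + 6) = u) :
    ∃ A B C : Fin 3, A ≠ B ∧ B ≠ C ∧ A ≠ C ∧
      c i = C ∧ c (i + 1) = A ∧ c (i + 2) = B ∧ c (i + 3) = C ∧
      c (i + 4) = B ∧ c (i + 5) = C ∧ c (i + 6) = A ∧ c (i + 7) = B := by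
  have s1 : c (i + 1) = c i + u := by rw [hstep, h0]
  have s2 : c (i + 2) = c i + u + u := by
    rw [show i + 2 = (i + 1) + 1 by ring, hstep, h1, s1]
  have s3 : c (i + 3) = c i := by
    rw [show i + 3 = (i + 2) + 1 by ring, hstep, h2, s2, fin3_three]
  have s4 : c (i + 4) = c i + u + u := by
    rw [show i + 4 = (i + 3) + 1 by ring, hstep, fin3_minor _ _ h3a hu h3b, s3, add_assoc]
  have s5 : c (i + 5) = c i := by
    rw [show i + 5 = (i + 4) + 1 by ring, hstep, h4, s4, fin3_three]
  have s6 : c (i + 6) = c i + u := by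
    rw [show i + 6 = (i + 5) + 1 by ring, hstep, h5, s5]
  have s7 : c (i + 7) = c i + u + u := by
    rw [show i + 7 = (i + 6) + 1 by ring, hstep, h6, s6]
  have hAB : c i + u ≠ c i + u + u := fun h => hu (by linear_combination -h)
  have hBC : c i + u + u ≠ c i := fun h => fin3_dbl u hu (by linear_combination h)
  have hAC : c i + u ≠ c i := fun h => hu (by linear_combination h)
  exact ⟨c i + u, c i + u + u, c i, hAB, hBC, hAC, rfl, s1, s2, s3, s4, s5, s6, s7⟩

/-- In any distinguishing proper 3-coloring of `C_n(1, 4)` with `n ≥ 8`, eight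
consecutively-indexed vertices receive colors in the pattern `C,A,B,C,B,C,A,B`,
where `A, B, C` are the three distinct colors. -/
theorem stmt_19 (n : ℕ) (hn : 8 ≤ n) (c : ZMod n → Fin 3)
    (hp : IsProperColoring (circulantGraph ({1, 4} : Set (ZMod n))) c)
    (hd : IsDistinguishing (circulantGraph ({1, 4} : Set (ZMod n))) c) :
    ∃ i : ZMod n, ∃ A B C : Fin 3, A ≠ B ∧ B ≠ C ∧ A ≠ C ∧
      c i = C ∧ c (i + 1) = A ∧ c (i + 2) = B ∧ c (i + 3) = C ∧
      c (i + 4) = B ∧ c (i + 5) = C ∧ c (i + 6) = A ∧ c (i + 7) = B := by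
  haveI : NeZero n := ⟨by omega⟩
  have hcast : ∀ k : ℕ, 0 < k → k < 8 → ((k : ZMod n) ≠ 0) := by
    intro k hk0 hk8 h
    rw [ZMod.natCast_eq_zero_iff] at h
    have := Nat.le_of_dvd hk0 h
    omega
  have h1 : (1 : ZMod n) ≠ 0 := by
    have := hcast 1 (by norm_num) (by norm_num); simpa using this
  have h4 : (4 : ZMod n) ≠ 0 := by
    have := hcast 4 (by norm_num) (by norm_num); simpa using this
  have h3 : (3 : ZMod n) ≠ 0 := by
    have := hcast 3 (by norm_num) (by norm_num); simpa using this
  -- adjacency facts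
  have adj1 : ∀ v : ZMod n, (circulantGraph ({1, 4} : Set (ZMod n))).Adj v (v + 1) := by
    intro v
    rw [circulantGraph_adj]
    refine ⟨fun h => h1 (by linear_combination -h), Or.inr ?_⟩
    left; show v + 1 - v = 1; ring
  have adj4 : ∀ v : ZMod n, (circulantGraph ({1, 4} : Set (ZMod n))).Adj v (v + 4) := by
    intro v
    rw [circulantGraph_adj]
    refine ⟨fun h => h4 (by linear_combination -h), Or.inr ?_⟩
    right; show v + 4 - v = 4; ring
  -- the difference sequence
  have hstep : ∀ v : ZMod n, c (v + 1) = c v + (c (v + 1) - c v) := by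
    intro v; ring
  set d : ZMod n → Fin 3 := fun i => c (i + 1) - c i with hdef
  have hstep : ∀ v, c (v + 1) = c v + d v := by intro v; simp [hdef]
  have hd0 : ∀ i, d i ≠ 0 := by
    intro i h
    exact hp i (i + 1) (adj1 i) (by rw [hstep i, h, add_zero])
  have hw : ∀ i, d i + d (i + 1) + d (i + 2) + d (i + 3) ≠ 0 := by
    intro i h
    apply hp i (i + 4) (adj4 i)
    have e1 : i + 1 + 1 = i + 2 := by ring
    have e2 : i + 2 + 1 = i + 3 := by ring
    have e3 : i + 3 + 1 = i + 4 := by ring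
    have : c (i + 4) = c i + (d i + d (i + 1) + d (i + 2) + d (i + 3)) := by
      rw [← e3, hstep, ← e2, hstep, ← e1, hstep, hstep]; ring
    rw [this, h, add_zero]
  by_cases hcst : ∀ j, d (j + 1) = d j
  · -- shift by 3 is a nontrivial color-preserving automorphism: contradiction
    exfalso
    have hper : ∀ v : ZMod n, c (v + 3) = c v := by
      intro v
      have e1 : v + 1 + 1 = v + 2 := by ring
      have e2 : v + 2 + 1 = v + 3 := by ring
      have hv1 : d (v + 1) = d v := hcst v
      have hv2 : d (v + 2) = d v := by rw [← e1, hcst, hv1]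
      have : c (v + 3) = c v + d v + d v + d v := by
        rw [← e2, hstep, ← e1, hstep, hstep, hv1, e1, hv2]
      rw [this, fin3_three]
    let φ : (circulantGraph ({1, 4} : Set (ZMod n))) ≃g
        (circulantGraph ({1, 4} : Set (ZMod n))) :=
      { toEquiv := Equiv.addRight (3 : ZMod n)
        map_rel_iff' := by
          intro x y
          exact circulantGraph_adj_translate }
    have := hd φ (fun v => hper v) 0
    simp only [φ, RelIso.coe_fn_mk, Equiv.coe_addRight, zero_add] at this
    exact h3 (by have h' : (0 : ZMod n) + 3 = 0 := this; simpa using h')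
  · push_neg at hcst
    obtain ⟨j, hj⟩ := hcst
    have ha0 : d j ≠ 0 := hd0 j
    have hb0 : d (j + 1) ≠ 0 := hd0 (j + 1)
    have hab : d j ≠ d (j + 1) := fun h => hj h.symm
    have habs : d j + d (j + 1) = 0 := fin3_neg _ _ ha0 hb0 hab
    -- window at j : d j + d(j+1) + d(j+2) + d(j+3) ≠ 0
    have h23 : d (j + 2) = d (j + 3) := by
      refine fin3_sum_eq _ _ (hd0 _) (hd0 _) fun h => hw j ?_
      linear_combination h + habs
    -- window at j - 1
    have w1 := hw (j - 1)
    rw [show j - 1 + 1 = j by ring, show j - 1 + 2 = j + 1 by ring,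
      show j - 1 + 3 = j + 2 by ring] at w1
    have hm1 : d (j - 1) = d (j + 2) := by
      refine fin3_sum_eq _ _ (hd0 _) (hd0 _) fun h => w1 ?_
      linear_combination h + habs
    -- window at j - 2
    have w2 := hw (j - 2)
    rw [show j - 2 + 1 = j - 1 by ring, show j - 2 + 2 = j by ring,
      show j - 2 + 3 = j + 1 by ring] at w2
    have hm2 : d (j - 2) = d (j + 2) := by
      rw [← hm1]
      refine fin3_sum_eq _ _ (hd0 _) (hd0 _) fun h => w2 ?_
      linear_combination h + habs
    have ht0 : d (j + 2) ≠ 0 := hd0 _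
    by_cases hta : d (j + 2) = d j
    · -- d(j+2) = d j : minority d(j+1) at position j + 1, take i = j - 2
      have hbt : d (j + 1) ≠ d (j + 2) := fun h => hab (hta.symm.trans h.symm)
      have hm4 : d (j + 4) = d (j + 2) := by
        have w := hw (j + 1)
        rw [show j + 1 + 1 = j + 2 by ring, show j + 1 + 2 = j + 3 by ring,
          show j + 1 + 3 = j + 4 by ring, ← h23] at w
        exact fin3_win' _ _ _ (hd0 _) ht0 hb0 hbt w
      refine ⟨j - 2, ?_⟩
      refine pattern_aux c d hstep (j - 2) (d (j + 2)) ht0 hm2 ?_ ?_ ?_ ?_ ?_ ?_ ?_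
      · rw [show j - 2 + 1 = j - 1 by ring]; exact hm1
      · rw [show j - 2 + 2 = j by ring]; exact hta.symm
      · rw [show j - 2 + 3 = j + 1 by ring]; exact hb0
      · rw [show j - 2 + 3 = j + 1 by ring]; exact hbt
      · rw [show j - 2 + 4 = j + 2 by ring]
      · rw [show j - 2 + 5 = j + 3 by ring]; exact h23.symm
      · rw [show j - 2 + 6 = j + 4 by ring]; exact hm4
    · -- d(j+2) = d(j+1) : minority d j at position j, take i = j - 3
      have htb : d (j + 2) = d (j + 1) := fin3_cover _ _ _ ha0 hb0 ht0 hab hta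
      have hat : d j ≠ d (j + 2) := fun h => hab (h.trans htb)
      have hm3 : d (j - 3) = d (j + 2) := by
        have w := hw (j - 3)
        rw [show j - 3 + 1 = j - 2 by ring, show j - 3 + 2 = j - 1 by ring,
          show j - 3 + 3 = j by ring, hm2, hm1] at w
        exact fin3_win _ _ _ (hd0 _) ht0 ha0 hat w
      refine ⟨j - 3, ?_⟩
      refine pattern_aux c d hstep (j - 3) (d (j + 2)) ht0 hm3 ?_ ?_ ?_ ?_ ?_ ?_ ?_
      · rw [show j - 3 + 1 = j - 2 by ring]; exact hm2
      · rw [show j - 3 + 2 = j - 1 by ring]; exact hm1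
      · rw [show j - 3 + 3 = j by ring]; exact ha0
      · rw [show j - 3 + 3 = j by ring]; exact hat
      · rw [show j - 3 + 4 = j + 1 by ring]; exact htb.symm
      · rw [show j - 3 + 5 = j + 2 by ring]
      · rw [show j - 3 + 6 = j + 3 by ring]; exact h23.symm
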